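/- Let Λ be the additive subgroup of ℝ³ generated by v₁ = (0, log 2, log 3), v₂ = (−log 2, 0, log 5), v₃ = (log 7, 0, log 2), and let w = (log 3, log 5, 0). Then w lies in the ℝ-linear span of v₁ and v₂ (explicitly, w = (log 5/log 2)·v₁ − (log 3/log 2)·v₂), and consequently the set of integer multiples {m•w : m ∈ ℤ}, taken modulo Λ, is not dense in ℝ³/Λ. -/
import Mathlib

open Real AddSubgroup

noncomputable def φ : (Fin 3 → ℝ) →+ ℝ :=
  AddMonoidHom.mk' (fun x => log 5 * x 0 - log 3 * x 1 + log 2 * x 2)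
    (fun x y => by simp [Pi.add_apply]; ring)

lemma φ_cont : Continuous φ := by
  show Continuous fun x : Fin 3 → ℝ => log 5 * x 0 - log 3 * x 1 + log 2 * x 2
  fun_prop

theorem counterexample_multiples_not_dense :
    ![Real.log 3, Real.log 5, (0 : ℝ)] =
      (Real.log 5 / Real.log 2) • ![(0 : ℝ), Real.log 2, Real.log 3] -
        (Real.log 3 / Real.log 2) • ![-Real.log 2, 0, Real.log 5] ∧
    ![Real.log 3, Real.log 5, (0 : ℝ)] ∈
      Submodule.span ℝ
        ({![(0 : ℝ), Real.log 2, Real.log 3], ![-Real.log 2, 0, Real.log 5]} :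
          Set (Fin 3 → ℝ)) ∧
    ¬ Dense (Set.range fun m : ℤ =>
        (QuotientAddGroup.mk (m • ![Real.log 3, Real.log 5, (0 : ℝ)]) :
          (Fin 3 → ℝ) ⧸
            (AddSubgroup.closure
              {![(0 : ℝ), Real.log 2, Real.log 3], ![-Real.log 2, 0, Real.log 5],
                ![Real.log 7, 0, Real.log 2]} : AddSubgroup (Fin 3 → ℝ)))) := by
  have h2 : Real.log 2 ≠ 0 := ne_of_gt (Real.log_pos (by norm_num))
  have h1 : ![Real.log 3, Real.log 5, (0 : ℝ)] =
      (Real.log 5 / Real.log 2) • ![(0 : ℝ), Real.log 2, Real.log 3] -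
        (Real.log 3 / Real.log 2) • ![-Real.log 2, 0, Real.log 5] := by
    funext i
    fin_cases i <;>
      simp [Pi.smul_apply, smul_eq_mul] <;> field_simp <;> ring
  refine ⟨h1, ?_, ?_⟩
  · rw [h1]
    exact Submodule.sub_mem _
      (Submodule.smul_mem _ _ (Submodule.subset_span (by simp)))
      (Submodule.smul_mem _ _ (Submodule.subset_span (by simp)))
  · intro hd
    set c : ℝ := log 5 * log 7 + log 2 * log 2 with hc
    have hcpos : 0 < c := by
      have h5 := Real.log_pos (show (1:ℝ) < 5 by norm_num)
      have h7 := Real.log_pos (show (1:ℝ) < 7 by norm_num)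
      have h2' := Real.log_pos (show (1:ℝ) < 2 by norm_num)
      positivity
    set Λ : AddSubgroup (Fin 3 → ℝ) := AddSubgroup.closure
      {![(0 : ℝ), Real.log 2, Real.log 3], ![-Real.log 2, 0, Real.log 5],
        ![Real.log 7, 0, Real.log 2]} with hΛ
    have hΛle : Λ ≤ (zmultiples c).comap φ := by
      rw [hΛ, AddSubgroup.closure_le]
      rintro v (rfl | rfl | rfl) <;>
        · simp only [SetLike.mem_coe, AddSubgroup.mem_comap, φ, AddMonoidHom.mk'_apply]
          simp only [Matrix.cons_val_zero, Matrix.cons_val_one, Matrix.head_cons,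
            Matrix.cons_val_two, Matrix.tail_cons]
          first
          | · rw [show log 5 * 0 - log 3 * log 2 + log 2 * log 3 = 0 by ring]
              exact zero_mem _
          | · rw [show log 5 * -log 2 - log 3 * 0 + log 2 * log 5 = 0 by ring]
              exact zero_mem _
          | · rw [show log 5 * log 7 - log 3 * 0 + log 2 * log 2 = c by rw [hc]; ring]
              exact mem_zmultiples c
    have hφw : φ ![Real.log 3, Real.log 5, (0 : ℝ)] = 0 := by
      simp only [φ, AddMonoidHom.mk'_apply, Matrix.cons_val_zero, Matrix.cons_val_one,
        Matrix.head_cons, Matrix.cons_val_two, Matrix.tail_cons]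
      ring
    have key : (QuotientAddGroup.mk ⁻¹'
        Set.range (fun m : ℤ =>
          (QuotientAddGroup.mk (m • ![Real.log 3, Real.log 5, (0 : ℝ)]) :
            (Fin 3 → ℝ) ⧸ Λ))) ⊆ φ ⁻¹' (zmultiples c : Set ℝ) := by
      rintro x ⟨m, hm⟩
      have hx : -x + m • ![Real.log 3, Real.log 5, (0 : ℝ)] ∈ Λ :=
        (QuotientAddGroup.eq).mp hm.symm
      have := hΛle hx
      simp only [AddSubgroup.mem_comap, map_add, map_neg, map_zsmul, hφw, smul_zero,
        add_zero] at this
      simpa using (zmultiples c).neg_mem this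
    rw [← QuotientAddGroup.dense_preimage_mk] at hd
    have hcl : IsClosed (φ ⁻¹' (zmultiples c : Set ℝ)) :=
      AddSubgroup.isClosed_of_discrete.preimage φ_cont
    have hx₀ : (![0, 0, c / (2 * log 2)] : Fin 3 → ℝ) ∈ φ ⁻¹' (zmultiples c : Set ℝ) := by
      have := (closure_minimal key hcl)
      rw [hd.closure_eq] at this
      exact this (Set.mem_univ _)
    have hφx₀ : φ ![0, 0, c / (2 * log 2)] = c / 2 := by
      simp only [φ, AddMonoidHom.mk'_apply, Matrix.cons_val_zero, Matrix.cons_val_one,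
        Matrix.head_cons, Matrix.cons_val_two, Matrix.tail_cons]
      field_simp
      ring
    rw [Set.mem_preimage, hφx₀, SetLike.mem_coe, AddSubgroup.mem_zmultiples_iff] at hx₀
    obtain ⟨k, hk⟩ := hx₀
    rw [zsmul_eq_mul] at hk
    have : (2 * k - 1 : ℝ) * c = 0 := by nlinarith [hk]
    have hk2 : (2 * k - 1 : ℝ) = 0 := by
      rcases mul_eq_zero.mp this with h | h
      · exact h
      · exact absurd h (ne_of_gt hcpos)
    have : (2 * k : ℤ) = 1 := by exact_mod_cast show (2 * (k:ℝ)) = 1 by linarith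
    omega
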